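/- There exists a constant C_0 > 0, depending only on the doubling constant of μ, the uniformity constant C_U and diam_d(∂Ω), such that for every non-negative integer n one has C_0^{-1}·μ(Ω_n) ≤ μ(Ω_{n+1}) ≤ C_0·μ(Ω_n). Moreover, for each non-negative integer n there exists a point y_n ∈ Ω_n with d_Ω(y_n) = 2^n such that C_0^{-1}·μ(B_d(y_n,2^n)) ≤ μ(Ω_n) ≤ C_0·μ(B_d(y_n,2^n)). -/

import Mathlib

open Set Metric MeasureTheory Filter
open scoped ENNReal NNReal Topology

noncomputable section

variable {X : Type*} [MetricSpace X] [MeasurableSpace X]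

/-- Distance to the boundary `Ωᶜ`. -/
def dOm (Ω : Set X) (x : X) : ℝ := Metric.infDist x Ωᶜ

/-- A 1-Lipschitz (arclength-parametrized) curve in `Ω` from `x` to `y`, of length `L`. -/
def IsCurveIn (Ω : Set X) (L : ℝ) (γ : ℝ → X) (x y : X) : Prop :=
  0 < L ∧ LipschitzOnWith 1 γ (Set.Icc 0 L) ∧ (∀ t ∈ Set.Icc 0 L, γ t ∈ Ω) ∧
    γ 0 = x ∧ γ L = y

/-- `Ω` is a `C`-uniform domain. -/
def IsUniformDomain (Ω : Set X) (C : ℝ) : Prop :=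
  ∀ x ∈ Ω, ∀ y ∈ Ω, x ≠ y → ∃ L γ, IsCurveIn Ω L γ x y ∧ L ≤ C * dist x y ∧
    ∀ t ∈ Set.Icc 0 L, min t (L - t) ≤ C * dOm Ω (γ t)

/-- The deformed length metric `d_φ`. -/
def dPhi (Ω : Set X) (φ : ℝ → ℝ) (x y : X) : ℝ :=
  sInf { l : ℝ | ∃ L γ, IsCurveIn Ω L γ x y ∧ l = ∫ s in (0:ℝ)..L, φ (dOm Ω (γ s)) }

/-- The bands `Ω_n`. -/
def band (Ω : Set X) : ℕ → Set X
  | 0 => {x | x ∈ Ω ∧ dOm Ω x ≤ 1}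
  | (n+1) => {x | x ∈ Ω ∧ (2:ℝ) ^ n < dOm Ω x ∧ dOm Ω x ≤ (2:ℝ) ^ (n+1)}

/-- The dampening function hypotheses. -/
def IsDampening (φ : ℝ → ℝ) (Cφ τ : ℝ) : Prop :=
  ContinuousOn φ (Set.Ioi 0) ∧ AntitoneOn φ (Set.Ioi 0) ∧
  (∀ t, 0 < t → 0 < φ t ∧ φ t ≤ 1) ∧ (∀ t, 0 < t → t ≤ 1 → φ t = 1) ∧
  MeasureTheory.IntegrableOn φ (Set.Ioi 0) ∧
  (2 < Cφ ∧ ∀ t, 0 < t → φ t ≤ Cφ * φ (2 * t)) ∧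
  (2 < τ ∧ ∀ t, 0 < t → τ * φ (2 * t) ≤ φ t)

/-- Control of the tails of `Σ φ(2ⁿ)^p μ(Ωₙ)`. -/
def TailCtrl (Ω : Set X) (μ : Measure X) (φ : ℝ → ℝ) (p : ℝ) (C6 : ℝ≥0) : Prop :=
  ∀ m : ℕ, 1 ≤ m →
    ∑' k : ℕ, ENNReal.ofReal (φ ((2:ℝ) ^ (m + k)) ^ p) * μ (band Ω (m + k)) ≤
      C6 * (ENNReal.ofReal (φ ((2:ℝ) ^ m) ^ p) * μ (band Ω m))

/-- `g` is an upper gradient of `u` along 1-Lipschitz curves in `S`. -/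
def IsUpperGradientOn {Y : Type*} [MetricSpace Y] (S : Set Y) (g : Y → ℝ≥0∞) (u : Y → ℝ) :
    Prop :=
  ∀ L : ℝ, 0 < L → ∀ γ : ℝ → Y, LipschitzOnWith 1 γ (Set.Icc 0 L) →
    (∀ t ∈ Set.Icc 0 L, γ t ∈ S) →
    ENNReal.ofReal |u (γ L) - u (γ 0)| ≤ ∫⁻ s in Set.Ioc (0:ℝ) L, g (γ s)

/-- Sub-Whitney `p`-Poincaré inequality on `Ω`. -/
def SubWhitneyPI (Ω : Set X) (μ : Measure X) (p : ℝ) : Prop :=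
  ∃ CP > (0:ℝ), ∃ lam ≥ (1:ℝ), ∃ A ≥ (1:ℝ), ∀ x ∈ Ω, ∀ r : ℝ, 0 < r → r ≤ dOm Ω x / A →
    ∀ u : X → ℝ, ∀ g : X → ℝ≥0∞, IsUpperGradientOn Ω g u →
      ENNReal.ofReal (⨍ y in Metric.ball x r, |u y - ⨍ z in Metric.ball x r, u z ∂μ| ∂μ) ≤
        ENNReal.ofReal (CP * r) * (⨍⁻ y in Metric.ball x (lam * r), g y ^ p ∂μ) ^ (1/p)

end

set_option linter.unusedSectionVars false

section Aux

variable {X : Type*} [MetricSpace X] [MeasurableSpace X]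

lemma dOm_lip (Ω : Set X) (u v : X) : |dOm Ω u - dOm Ω v| ≤ dist u v := by
  have := (Metric.lipschitz_infDist_pt (Ωᶜ : Set X)).dist_le_mul u v
  simpa [dOm, Real.dist_eq] using this

lemma mem_of_dOm_pos {Ω : Set X} {x : X} (h : 0 < dOm Ω x) : x ∈ Ω := by
  by_contra hx
  have : dOm Ω x = 0 := Metric.infDist_zero_of_mem hx
  simp only [dOm] at *; linarith

lemma band_subset (Ω : Set X) (n : ℕ) :
    band Ω n ⊆ {x | x ∈ Ω ∧ dOm Ω x ≤ (2:ℝ) ^ n} := by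
  cases n with
  | zero => intro x hx; exact ⟨hx.1, by simpa using hx.2⟩
  | succ n => intro x hx; exact ⟨hx.1, hx.2.2⟩

lemma mem_band_of_eq {Ω : Set X} {y : X} (hyΩ : y ∈ Ω) (n : ℕ)
    (hy : dOm Ω y = (2:ℝ) ^ n) : y ∈ band Ω n := by
  cases n with
  | zero => exact ⟨hyΩ, by rw [hy]; norm_num⟩
  | succ n =>
      refine ⟨hyΩ, ?_, le_of_eq hy⟩
      rw [hy, pow_succ]
      nlinarith [pow_pos (by norm_num : (0:ℝ) < 2) n]

lemma ball_subset_band {Ω : Set X} {z : X} (n : ℕ)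
    (hz : dOm Ω z = 3 * (2:ℝ) ^ n / 4) :
    Metric.ball z ((2:ℝ) ^ n / 4) ⊆ band Ω n := by
  intro w hw
  have hd : |dOm Ω w - dOm Ω z| ≤ dist w z := dOm_lip Ω w z
  have hwz : dist w z < (2:ℝ) ^ n / 4 := Metric.mem_ball.mp hw
  have h2n : (0:ℝ) < 2 ^ n := by positivity
  have habs := abs_le.mp hd
  have hlow : (2:ℝ) ^ n / 2 < dOm Ω w := by rw [hz] at habs; linarith [habs.1, habs.2]
  have hhigh : dOm Ω w < (2:ℝ) ^ n := by rw [hz] at habs; linarith [habs.1, habs.2]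
  have hwΩ : w ∈ Ω := mem_of_dOm_pos (by linarith)
  cases n with
  | zero => exact ⟨hwΩ, by simpa using hhigh.le⟩
  | succ n =>
      refine ⟨hwΩ, ?_, hhigh.le⟩
      have h2 : (2:ℝ) ^ (n+1) / 2 = 2 ^ n := by rw [pow_succ]; ring
      linarith [h2 ▸ hlow]

lemma exists_dOm_eq (Ω : Set X)
    (hΩdense : Dense Ω) (hΩunbdd : ¬ Bornology.IsBounded Ω)
    (hbdry : Ωᶜ.Nonempty) (hbdrybdd : Bornology.IsBounded Ωᶜ)
    {CU : ℝ} (hUnif : IsUniformDomain Ω CU)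
    (v : ℝ) (hv : 3/4 ≤ v) : ∃ y ∈ Ω, dOm Ω y = v := by
  obtain ⟨b0, hb0⟩ := hbdry
  obtain ⟨xs, hxsΩ, hxsd⟩ := Metric.mem_closure_iff.mp (hΩdense b0) (1/2) (by norm_num)
  have hs : dOm Ω xs < 3/4 := by
    have h1 : dOm Ω xs ≤ dist xs b0 := Metric.infDist_le_dist_of_mem hb0
    rw [dist_comm] at h1; linarith
  obtain ⟨R0, hR0⟩ := hbdrybdd.subset_closedBall b0
  have hbig : ∃ x ∈ Ω, R0 + v + 1 < dist x b0 := by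
    by_contra h; push_neg at h
    exact hΩunbdd ((Metric.isBounded_closedBall (x := b0) (r := R0 + v + 1)).subset
      fun x hx => Metric.mem_closedBall.mpr (h x hx))
  obtain ⟨xb, hxbΩ, hxbd⟩ := hbig
  have hbigd : v < dOm Ω xb := by
    by_contra h; push_neg at h
    obtain ⟨q, hq, hdq⟩ := (Metric.infDist_lt_iff ⟨b0, hb0⟩).mp (lt_of_le_of_lt h (lt_add_one v))
    have h1 : dist q b0 ≤ R0 := Metric.mem_closedBall.mp (hR0 hq)
    have h2 : dist xb b0 ≤ dist xb q + dist q b0 := dist_triangle _ _ _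
    linarith
  have hne : xs ≠ xb := by intro h; rw [h] at hs; linarith
  obtain ⟨L, γ, ⟨hL, hLip, hmem, h0, hE⟩, -, -⟩ := hUnif xs hxsΩ xb hxbΩ hne
  have hcont : ContinuousOn (fun t => dOm Ω (γ t)) (Set.Icc 0 L) :=
    (Metric.continuous_infDist_pt (Ωᶜ : Set X)).comp_continuousOn hLip.continuousOn
  have hmemIcc : v ∈ Set.Icc (dOm Ω (γ 0)) (dOm Ω (γ L)) := by
    rw [h0, hE]; exact ⟨by linarith, hbigd.le⟩
  obtain ⟨t, htI, hft⟩ := intermediate_value_Icc hL.le hcont hmemIcc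
  exact ⟨γ t, hmem t htI, hft⟩

lemma dbl_iter {Ω : Set X} {μ : MeasureTheory.Measure X} {Cμ : ℝ≥0}
    (hdbl : ∀ x ∈ Ω, ∀ r : ℝ, 0 < r →
      0 < μ (Metric.ball x r) ∧ μ (Metric.ball x r) < ⊤ ∧
      μ (Metric.ball x (2*r)) ≤ Cμ * μ (Metric.ball x r))
    {x : X} (hx : x ∈ Ω) {r : ℝ} (hr : 0 < r) (k : ℕ) :
    μ (Metric.ball x ((2:ℝ)^k * r)) ≤ (Cμ : ℝ≥0∞)^k * μ (Metric.ball x r) := by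
  induction k with
  | zero => simp
  | succ k ih =>
      have h1 : (2:ℝ)^(k+1)*r = 2*((2:ℝ)^k*r) := by ring
      calc μ (Metric.ball x ((2:ℝ)^(k+1)*r)) = μ (Metric.ball x (2*((2:ℝ)^k*r))) := by rw [h1]
        _ ≤ Cμ * μ (Metric.ball x ((2:ℝ)^k*r)) := (hdbl x hx _ (by positivity)).2.2
        _ ≤ Cμ * ((Cμ : ℝ≥0∞)^k * μ (Metric.ball x r)) := mul_le_mul_right ih _
        _ = (Cμ : ℝ≥0∞)^(k+1) * μ (Metric.ball x r) := by ring

end Aux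

theorem comparable_layers
    {X : Type*} [MetricSpace X] [MeasurableSpace X] [BorelSpace X] [CompleteSpace X]
    (Ω : Set X) (hΩopen : IsOpen Ω) (hΩdense : Dense Ω)
    (hΩunbdd : ¬ Bornology.IsBounded Ω)
    (hbdry : Ωᶜ.Nonempty) (hbdrybdd : Bornology.IsBounded Ωᶜ)
    (CU : ℝ) (hCU : 1 ≤ CU) (hUnif : IsUniformDomain Ω CU)
    (μ : Measure X) (hsupp : μ Ωᶜ = 0)
    (Cμ : ℝ≥0) (hCμ : 1 ≤ Cμ)
    (hdbl : ∀ x ∈ Ω, ∀ r : ℝ, 0 < r →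
      0 < μ (Metric.ball x r) ∧ μ (Metric.ball x r) < ⊤ ∧
      μ (Metric.ball x (2*r)) ≤ Cμ * μ (Metric.ball x r))
    (p : ℝ) (hp : 1 ≤ p) :
    ∃ C0 : ℝ≥0, 0 < C0 ∧
      ∀ n : ℕ,
        (μ (band Ω n) ≤ C0 * μ (band Ω (n+1)) ∧ μ (band Ω (n+1)) ≤ C0 * μ (band Ω n)) ∧
        ∃ y ∈ band Ω n, dOm Ω y = (2:ℝ) ^ n ∧
          μ (Metric.ball y ((2:ℝ) ^ n)) ≤ C0 * μ (band Ω n) ∧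
          μ (band Ω n) ≤ C0 * μ (Metric.ball y ((2:ℝ) ^ n)) := by
  -- Setup: boundary point and radius bound
  obtain ⟨b0, hb0⟩ := hbdry
  obtain ⟨R0, hR0⟩ := hbdrybdd.subset_closedBall b0
  set R : ℝ := max R0 0 with hRdef
  have hRnn : 0 ≤ R := le_max_right _ _
  have hR0' : Ωᶜ ⊆ Metric.closedBall b0 R :=
    hR0.trans (Metric.closedBall_subset_closedBall (le_max_left _ _))
  set A : ℝ := 2*R + 6 with hAdef
  have hA6 : 6 ≤ A := by simp only [hAdef]; linarith
  -- distance bound between points with small dOm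
  have hdist : ∀ u v : X, ∀ s : ℝ, 1 ≤ s → dOm Ω u ≤ s → dOm Ω v ≤ s → dist u v ≤ A * s := by
    intro u v s hs hu hv
    obtain ⟨pu, hpu, hdu⟩ := (Metric.infDist_lt_iff ⟨b0, hb0⟩).mp (lt_of_le_of_lt hu (lt_add_one s))
    obtain ⟨pv, hpv, hdv⟩ := (Metric.infDist_lt_iff ⟨b0, hb0⟩).mp (lt_of_le_of_lt hv (lt_add_one s))
    have h1 : dist pu b0 ≤ R := Metric.mem_closedBall.mp (hR0' hpu)
    have h2 : dist pv b0 ≤ R := Metric.mem_closedBall.mp (hR0' hpv)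
    have h3 : dist u v ≤ dist u pu + dist pu pv + dist pv v := dist_triangle4 u pu pv v
    have h4 : dist pu pv ≤ dist pu b0 + dist b0 pv := dist_triangle _ _ _
    have h5 : dist b0 pv = dist pv b0 := dist_comm _ _
    have h6 : dist pv v = dist v pv := dist_comm _ _
    simp only [hAdef]
    nlinarith [hdu, hdv, hRnn, hs]
  obtain ⟨K, hK⟩ := pow_unbounded_of_one_lt (R := ℝ) (8*A + 8) one_lt_two
  have hCμ0 : (0:ℝ≥0) < Cμ := lt_of_lt_of_le one_pos hCμ
  have h1C : (1:ℝ≥0∞) ≤ (Cμ : ℝ≥0∞)^K := one_le_pow_of_one_le' (by exact_mod_cast hCμ) K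
  have hCcoe : ((Cμ^(2*K) : ℝ≥0) : ℝ≥0∞) = (Cμ : ℝ≥0∞)^K * (Cμ : ℝ≥0∞)^K := by
    rw [ENNReal.coe_pow, two_mul, pow_add]
  refine ⟨Cμ^(2*K), pow_pos hCμ0 _, ?_⟩
  intro n
  set E : ℝ := (2:ℝ)^n with hEdef
  have hE1 : 1 ≤ E := one_le_pow₀ (by norm_num)
  have hE0 : 0 < E := by linarith
  have hE2 : (2:ℝ)^(n+1) = 2*E := by rw [hEdef, pow_succ]; ring
  -- the four special points
  obtain ⟨y, hyΩ, hy⟩ := exists_dOm_eq Ω hΩdense hΩunbdd ⟨b0, hb0⟩ hbdrybdd hUnif E (by linarith)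
  obtain ⟨y', hy'Ω, hy'⟩ := exists_dOm_eq Ω hΩdense hΩunbdd ⟨b0, hb0⟩ hbdrybdd hUnif (2*E)
    (by linarith)
  obtain ⟨z, hzΩ, hz⟩ := exists_dOm_eq Ω hΩdense hΩunbdd ⟨b0, hb0⟩ hbdrybdd hUnif (3*E/4)
    (by linarith)
  obtain ⟨z', hz'Ω, hz'⟩ := exists_dOm_eq Ω hΩdense hΩunbdd ⟨b0, hb0⟩ hbdrybdd hUnif (3*(2*E)/4)
    (by linarith)
  have hzball : Metric.ball z (E/4) ⊆ band Ω n := by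
    have := ball_subset_band (Ω := Ω) (z := z) n (by rw [hz, hEdef])
    rwa [← hEdef] at this
  have hz'ball : Metric.ball z' (2*E/4) ⊆ band Ω (n+1) := by
    have := ball_subset_band (Ω := Ω) (z := z') (n+1) (by rw [hz', hE2])
    rwa [hE2] at this
  have h2K : (8*A + 8) ≤ (2:ℝ)^K := hK.le
  -- T1 : μ (band n) ≤ Cμ^K μ(ball y E)
  have hIncl1 : band Ω n ⊆ Metric.ball y ((2:ℝ)^K * E) := by
    intro x hx
    obtain ⟨hxΩ, hxd⟩ := band_subset Ω n hx
    have : dist x y ≤ A * E := hdist x y E hE1 hxd (le_of_eq hy)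
    have hAK : A * E < (2:ℝ)^K * E := by nlinarith
    exact Metric.mem_ball.mpr (lt_of_le_of_lt this hAK)
  have T1 : μ (band Ω n) ≤ (Cμ : ℝ≥0∞)^K * μ (Metric.ball y E) :=
    (measure_mono hIncl1).trans (dbl_iter hdbl hyΩ hE0 K)
  -- T2 : μ(ball y E) ≤ Cμ^K μ(band n)
  have hy2E : dOm Ω y ≤ 2*E := by rw [hy]; linarith
  have hIncl2 : Metric.ball y E ⊆ Metric.ball z ((2:ℝ)^K * (E/4)) := by
    intro w hw
    have h1 : dist w y < E := Metric.mem_ball.mp hw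
    have h2 : dist y z ≤ A * E := hdist y z E hE1 (le_of_eq hy) (by rw [hz]; linarith)
    have h3 : dist w z ≤ dist w y + dist y z := dist_triangle _ _ _
    exact Metric.mem_ball.mpr (by nlinarith)
  have T2 : μ (Metric.ball y E) ≤ (Cμ : ℝ≥0∞)^K * μ (band Ω n) := by
    calc μ (Metric.ball y E) ≤ μ (Metric.ball z ((2:ℝ)^K * (E/4))) := measure_mono hIncl2
      _ ≤ (Cμ : ℝ≥0∞)^K * μ (Metric.ball z (E/4)) := dbl_iter hdbl hzΩ (by linarith) K
      _ ≤ (Cμ : ℝ≥0∞)^K * μ (band Ω n) := mul_le_mul_right (measure_mono hzball) _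
  -- T3 : μ(ball y E) ≤ Cμ^K μ(band (n+1))
  have h2E1 : (1:ℝ) ≤ 2*E := by linarith
  have hIncl3 : Metric.ball y E ⊆ Metric.ball z' ((2:ℝ)^K * (2*E/4)) := by
    intro w hw
    have h1 : dist w y < E := Metric.mem_ball.mp hw
    have h2 : dist y z' ≤ A * (2*E) := hdist y z' (2*E) h2E1 hy2E (by rw [hz']; linarith)
    have h3 : dist w z' ≤ dist w y + dist y z' := dist_triangle _ _ _
    exact Metric.mem_ball.mpr (by nlinarith)
  have T3 : μ (Metric.ball y E) ≤ (Cμ : ℝ≥0∞)^K * μ (band Ω (n+1)) := by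
    calc μ (Metric.ball y E) ≤ μ (Metric.ball z' ((2:ℝ)^K * (2*E/4))) := measure_mono hIncl3
      _ ≤ (Cμ : ℝ≥0∞)^K * μ (Metric.ball z' (2*E/4)) := dbl_iter hdbl hz'Ω (by linarith) K
      _ ≤ (Cμ : ℝ≥0∞)^K * μ (band Ω (n+1)) := mul_le_mul_right (measure_mono hz'ball) _
  -- T1' : μ(band (n+1)) ≤ Cμ^K μ(ball y' (2E))
  have hIncl1' : band Ω (n+1) ⊆ Metric.ball y' ((2:ℝ)^K * (2*E)) := by
    intro x hx
    obtain ⟨hxΩ, hxd⟩ := band_subset Ω (n+1) hx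
    rw [hE2] at hxd
    have : dist x y' ≤ A * (2*E) := hdist x y' (2*E) h2E1 hxd (le_of_eq hy')
    exact Metric.mem_ball.mpr (lt_of_le_of_lt this (by nlinarith))
  have T1' : μ (band Ω (n+1)) ≤ (Cμ : ℝ≥0∞)^K * μ (Metric.ball y' (2*E)) :=
    (measure_mono hIncl1').trans (dbl_iter hdbl hy'Ω (by linarith) K)
  -- T4 : μ(ball y' (2E)) ≤ Cμ^K μ(band n)
  have hIncl4 : Metric.ball y' (2*E) ⊆ Metric.ball z ((2:ℝ)^K * (E/4)) := by
    intro w hw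
    have h1 : dist w y' < 2*E := Metric.mem_ball.mp hw
    have h2 : dist y' z ≤ A * (2*E) := hdist y' z (2*E) h2E1 (le_of_eq hy') (by rw [hz]; linarith)
    have h3 : dist w z ≤ dist w y' + dist y' z := dist_triangle _ _ _
    exact Metric.mem_ball.mpr (by nlinarith)
  have T4 : μ (Metric.ball y' (2*E)) ≤ (Cμ : ℝ≥0∞)^K * μ (band Ω n) := by
    calc μ (Metric.ball y' (2*E)) ≤ μ (Metric.ball z ((2:ℝ)^K * (E/4))) := measure_mono hIncl4
      _ ≤ (Cμ : ℝ≥0∞)^K * μ (Metric.ball z (E/4)) := dbl_iter hdbl hzΩ (by linarith) K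
      _ ≤ (Cμ : ℝ≥0∞)^K * μ (band Ω n) := mul_le_mul_right (measure_mono hzball) _
  -- conclusions
  refine ⟨⟨?_, ?_⟩, y, mem_band_of_eq hyΩ n hy, hy, ?_, ?_⟩
  · calc μ (band Ω n) ≤ (Cμ : ℝ≥0∞)^K * μ (Metric.ball y E) := T1
      _ ≤ (Cμ : ℝ≥0∞)^K * ((Cμ : ℝ≥0∞)^K * μ (band Ω (n+1))) := mul_le_mul_right T3 _
      _ = ↑(Cμ^(2*K)) * μ (band Ω (n+1)) := by rw [hCcoe, mul_assoc]
  · calc μ (band Ω (n+1)) ≤ (Cμ : ℝ≥0∞)^K * μ (Metric.ball y' (2*E)) := T1'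
      _ ≤ (Cμ : ℝ≥0∞)^K * ((Cμ : ℝ≥0∞)^K * μ (band Ω n)) := mul_le_mul_right T4 _
      _ = ↑(Cμ^(2*K)) * μ (band Ω n) := by rw [hCcoe, mul_assoc]
  · calc μ (Metric.ball y E) ≤ (Cμ : ℝ≥0∞)^K * μ (band Ω n) := T2
      _ ≤ (Cμ : ℝ≥0∞)^K * ((Cμ : ℝ≥0∞)^K * μ (band Ω n)) :=
        le_mul_of_one_le_left zero_le h1C |>.trans (le_of_eq (by ring))
      _ = ↑(Cμ^(2*K)) * μ (band Ω n) := by rw [hCcoe, mul_assoc]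
  · calc μ (band Ω n) ≤ (Cμ : ℝ≥0∞)^K * μ (Metric.ball y E) := T1
      _ ≤ (Cμ : ℝ≥0∞)^K * ((Cμ : ℝ≥0∞)^K * μ (Metric.ball y E)) :=
        le_mul_of_one_le_left zero_le h1C |>.trans (le_of_eq (by ring))
      _ = ↑(Cμ^(2*K)) * μ (Metric.ball y E) := by rw [hCcoe, mul_assoc]
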